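/- arXiv:1306.0981 — 5 statements merged into one kernel-verified Lean document; each statement's English description precedes it below -/
import Mathlib

section
/- For integers n and r with 2 ≤ r ≤ n/2, if r ≤ ((n+2) - √(n+2))/2 then C(n,r) - C(n,r-1) ≥ C(n,r-1) - C(n,r-2). -/
theorem stmt_1 (n r : ℕ) (hr : 2 ≤ r) (hrn : 2 * r ≤ n)
    (h : (r : ℝ) ≤ ((n + 2) - Real.sqrt (n + 2)) / 2) :
    (n.choose r : ℝ) - n.choose (r - 1) ≥ (n.choose (r - 1) : ℝ) - n.choose (r - 2) := by
  obtain ⟨k, rfl⟩ : ∃ k, r = k + 2 := ⟨r - 2, by omega⟩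
  have hk1 : k + 2 - 1 = k + 1 := rfl
  have hk2 : k + 2 - 2 = k := rfl
  rw [hk1, hk2]
  -- key squared inequality
  have hnn : (0:ℝ) ≤ (n:ℝ) + 2 := by positivity
  have hs : Real.sqrt ((n:ℝ) + 2) ≤ (n:ℝ) + 2 - 2 * (k + 2) := by
    have := h
    push_cast at this
    nlinarith [this]
  have hsq : ((n:ℝ) + 2 - 2 * ((k:ℝ) + 2)) ^ 2 ≥ (n:ℝ) + 2 := by
    have h0 : (0:ℝ) ≤ Real.sqrt ((n:ℝ) + 2) := Real.sqrt_nonneg _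
    nlinarith [Real.sq_sqrt hnn, hs, h0]
  -- recurrences
  have h1 : n.choose (k + 2) * (k + 2) = n.choose (k + 1) * (n - (k + 1)) :=
    Nat.choose_succ_right_eq n (k + 1)
  have h2 : n.choose (k + 1) * (k + 1) = n.choose k * (n - k) :=
    Nat.choose_succ_right_eq n k
  have hk1n : k + 1 ≤ n := by omega
  have hkn : k ≤ n := by omega
  have h1' : (n.choose (k + 2) : ℝ) * (k + 2) = (n.choose (k + 1) : ℝ) * ((n:ℝ) - (k + 1)) := by
    have := congrArg (Nat.cast : ℕ → ℝ) h1
    push_cast [Nat.cast_sub hk1n] at this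
    linarith [this]
  have h2' : (n.choose (k + 1) : ℝ) * (k + 1) = (n.choose k : ℝ) * ((n:ℝ) - k) := by
    have := congrArg (Nat.cast : ℕ → ℝ) h2
    push_cast [Nat.cast_sub hkn] at this
    linarith [this]
  have hb : (0:ℝ) < n.choose (k + 1) := by
    exact_mod_cast Nat.choose_pos hk1n
  have hnk : (0:ℝ) < (n:ℝ) - k := by
    have : (k:ℝ) + 1 ≤ n := by exact_mod_cast hk1n
    linarith
  nlinarith [mul_le_mul_of_nonneg_left hsq hb.le, h1', h2', hnk, hb,
    mul_pos hnk (by positivity : (0:ℝ) < (k:ℝ) + 2)]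
end

section
/- For every integer k ≥ 1, the number r₀ = (1/2)(-3 + √(3 + 3k + √(12 + 20k + 9k²))) is not an integer. -/
theorem stmt_11 (k : ℤ) (hk : 1 ≤ k) :
    ¬ ∃ m : ℤ,
      (-3 + Real.sqrt (3 + 3 * (k : ℝ) + Real.sqrt (12 + 20 * k + 9 * (k : ℝ) ^ 2))) / 2 = m := by
  rintro ⟨m, hm⟩
  have hkR : (1 : ℝ) ≤ (k : ℝ) := by exact_mod_cast hk
  have hD : (0 : ℝ) ≤ 12 + 20 * (k : ℝ) + 9 * (k : ℝ) ^ 2 := by nlinarith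
  have hsD : (0 : ℝ) ≤ Real.sqrt (12 + 20 * (k : ℝ) + 9 * (k : ℝ) ^ 2) := Real.sqrt_nonneg _
  have hinner : (0 : ℝ) ≤ 3 + 3 * (k : ℝ) + Real.sqrt (12 + 20 * (k : ℝ) + 9 * (k : ℝ) ^ 2) := by
    linarith
  have hs : Real.sqrt (3 + 3 * (k : ℝ) + Real.sqrt (12 + 20 * (k : ℝ) + 9 * (k : ℝ) ^ 2))
      = 2 * (m : ℝ) + 3 := by linarith [hm]
  have hsq : (2 * (m : ℝ) + 3) ^ 2
      = 3 + 3 * (k : ℝ) + Real.sqrt (12 + 20 * (k : ℝ) + 9 * (k : ℝ) ^ 2) := by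
    rw [← hs]; exact Real.sq_sqrt hinner
  have hsD2 : Real.sqrt (12 + 20 * (k : ℝ) + 9 * (k : ℝ) ^ 2)
      = (2 * (m : ℝ) + 3) ^ 2 - 3 - 3 * (k : ℝ) := by linarith
  set n : ℤ := (2 * m + 3) ^ 2 - 3 - 3 * k with hn
  have hnR : ((n : ℤ) : ℝ) = (2 * (m : ℝ) + 3) ^ 2 - 3 - 3 * (k : ℝ) := by
    push_cast [hn]; ring
  have hn0 : (0 : ℤ) ≤ n := by
    have : (0 : ℝ) ≤ (n : ℝ) := by rw [hnR, ← hsD2]; exact hsD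
    exact_mod_cast this
  have hn2R : ((n : ℝ)) ^ 2 = 12 + 20 * (k : ℝ) + 9 * (k : ℝ) ^ 2 := by
    rw [hnR, ← hsD2]
    exact Real.sq_sqrt hD
  have hn2 : n ^ 2 = 12 + 20 * k + 9 * k ^ 2 := by exact_mod_cast hn2R
  rcases le_or_gt n (3 * k + 3) with h | h
  · nlinarith
  · nlinarith
end

section
/- For d = 3 and n = 3k with k ≥ 1, if (p₁,p₂,p₃) = (k+a+b, k+a, k-2a-b) with integers a > 0 and b ≥ 0 and k-2a-b ≥ 0, then [f(p₁,p₂,p₃) - f(p₁+1,p₂-1,p₃)] + [f(p₁,p₂,p₃) - f(p₁,p₂-1,p₃+1)] < 0; in particular f cannot attain its maximum over partitions of 3k at such a triple. -/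
/-- Frobenius multiplicity for SU(3), extended by `0` to invalid partitions. -/
noncomputable def f3 (p₁ p₂ p₃ : ℤ) : ℚ :=
  if p₂ ≤ p₁ ∧ p₃ ≤ p₂ ∧ 0 ≤ p₃ then
    (Nat.factorial (p₁ + p₂ + p₃).toNat : ℚ) * ((p₁ - p₂ + 1) * (p₁ - p₃ + 2) * (p₂ - p₃ + 1)) /
      ((Nat.factorial (p₁ + 2).toNat : ℚ) * (Nat.factorial (p₂ + 1).toNat) * (Nat.factorial p₃.toNat))
  else 0

private lemma fact_succ_cast (z : ℤ) (hz : 0 ≤ z) :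
    ((Nat.factorial (z + 1).toNat : ℚ)) = ((z : ℚ) + 1) * (Nat.factorial z.toNat : ℚ) := by
  have h : (z + 1).toNat = z.toNat + 1 := by omega
  rw [h, Nat.factorial_succ]
  have h2 : ((z.toNat : ℚ)) = (z : ℚ) := by exact_mod_cast Int.toNat_of_nonneg hz
  push_cast
  rw [h2]

private lemma key_poly (K A B : ℚ) (hk : 1 ≤ K) (ha : 1 ≤ A) (hb : 0 ≤ B)
    (hp : 2 * A + B ≤ K) :
    0 < (K + A + 1) * (K - 2 * A - B + 1) * ((B + 3) * (3 * A + 2 * B + 3) * (3 * A + B))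
      + (K + A + 1) * (K + A + B + 3) * ((B + 2) * (3 * A + 2 * B + 1) * (3 * A + B - 1))
      - 2 * ((B + 1) * (3 * A + 2 * B + 2) * (3 * A + B + 1)) * (K + A + B + 3) * (K - 2 * A - B + 1) := by
  have ha' : (0:ℚ) ≤ A - 1 := by linarith
  have hc : (0:ℚ) ≤ K - 2 * A - B := by linarith
  have mono : ∀ i j l : ℕ, (0:ℚ) ≤ (A - 1) ^ i * B ^ j * (K - 2 * A - B) ^ l := fun i j l =>
    mul_nonneg (mul_nonneg (pow_nonneg ha' i) (pow_nonneg hb j)) (pow_nonneg hc l)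
  have s1 : (0:ℚ) ≤ 2 * B * (B ^ 2 - (K - 2 * A - B)) ^ 2 :=
    mul_nonneg (by linarith) (sq_nonneg _)
  have s2 : (0:ℚ) ≤ 3 * B * (B - (K - 2 * A - B)) ^ 2 :=
    mul_nonneg (by linarith) (sq_nonneg _)
  linarith [mono 0 0 1, mono 0 0 2, mono 0 1 0, mono 0 1 1, mono 0 1 2, mono 0 2 0,
    mono 0 3 0, mono 0 4 0, mono 0 5 0, mono 1 0 0, mono 1 0 1, mono 1 0 2, mono 1 1 0,
    mono 1 1 1, mono 1 1 2, mono 1 2 0, mono 1 2 1, mono 1 3 0, mono 1 3 1, mono 1 4 0,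
    mono 2 0 0, mono 2 0 1, mono 2 0 2, mono 2 1 0, mono 2 1 1, mono 2 2 0, mono 2 2 1,
    mono 2 3 0, mono 3 0 0, mono 3 0 1, mono 3 1 0, mono 3 1 1, mono 3 2 0, mono 4 0 0,
    mono 4 1 0, s1, s2]

private lemma main_ineq (N P Q R β γ δ A A1 A2 : ℚ) (hN : 0 < N) (hP : 0 < P) (hQ : 0 < Q)
    (hR : 0 < R) (hβ : 0 < β) (hγ : 0 < γ) (hδ : 0 < δ)
    (hL : 0 < A1 * β * δ + A2 * β * γ - 2 * A * γ * δ) :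
    (N * A / (P * (β * Q) * R) - N * A1 / (γ * P * Q * R))
      + (N * A / (P * (β * Q) * R) - N * A2 / (P * Q * (δ * R))) < 0 := by
  have hEq : (N * A / (P * (β * Q) * R) - N * A1 / (γ * P * Q * R))
      + (N * A / (P * (β * Q) * R) - N * A2 / (P * Q * (δ * R)))
      = -(N / (P * Q * R * β * γ * δ) * (A1 * β * δ + A2 * β * γ - 2 * A * γ * δ)) := by
    field_simp
    ring
  rw [hEq, neg_lt_zero]
  exact mul_pos (div_pos hN (by positivity)) hL

theorem stmt_12 (k a b : ℤ) (hk : 1 ≤ k) (ha : 0 < a) (hb : 0 ≤ b)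
    (hp : 0 ≤ k - 2 * a - b) :
    ((f3 (k + a + b) (k + a) (k - 2 * a - b) - f3 (k + a + b + 1) (k + a - 1) (k - 2 * a - b)) +
      (f3 (k + a + b) (k + a) (k - 2 * a - b) - f3 (k + a + b) (k + a - 1) (k - 2 * a - b + 1)) < 0) ∧
    ∃ q₁ q₂ q₃ : ℤ, q₂ ≤ q₁ ∧ q₃ ≤ q₂ ∧ 0 ≤ q₃ ∧ q₁ + q₂ + q₃ = 3 * k ∧
      f3 (k + a + b) (k + a) (k - 2 * a - b) < f3 q₁ q₂ q₃ := by
  -- notation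
  set N : ℚ := (Nat.factorial (3 * k).toNat : ℚ) with hN
  set P : ℚ := (Nat.factorial (k + a + b + 2).toNat : ℚ) with hP
  set Q : ℚ := (Nat.factorial (k + a).toNat : ℚ) with hQ
  set R : ℚ := (Nat.factorial (k - 2 * a - b).toNat : ℚ) with hR
  have hNpos : 0 < N := by rw [hN]; exact_mod_cast Nat.factorial_pos _
  have hPpos : 0 < P := by rw [hP]; exact_mod_cast Nat.factorial_pos _
  have hQpos : 0 < Q := by rw [hQ]; exact_mod_cast Nat.factorial_pos _
  have hRpos : 0 < R := by rw [hR]; exact_mod_cast Nat.factorial_pos _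
  have hKQ : (1:ℚ) ≤ (k:ℚ) := by exact_mod_cast hk
  have haQ : (1:ℚ) ≤ (a:ℚ) := by exact_mod_cast ha
  have hbQ : (0:ℚ) ≤ (b:ℚ) := by exact_mod_cast hb
  have hpQ : 2 * (a:ℚ) + (b:ℚ) ≤ (k:ℚ) := by
    have : 2 * a + b ≤ k := by linarith
    exact_mod_cast this
  -- value of f3 at the three points
  have e0 : f3 (k + a + b) (k + a) (k - 2 * a - b)
      = N * (((b:ℚ) + 1) * (3 * (a:ℚ) + 2 * b + 2) * (3 * (a:ℚ) + (b:ℚ) + 1))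
        / (P * ((((k:ℚ) + a) + 1) * Q) * R) := by
    rw [f3, if_pos ⟨by linarith, by linarith, hp⟩]
    have h1 : k + a + b + (k + a) + (k - 2 * a - b) = 3 * k := by ring
    rw [h1, fact_succ_cast (k + a) (by linarith)]
    rw [hN, hP, hQ, hR]
    push_cast
    ring
  have e1 : f3 (k + a + b + 1) (k + a - 1) (k - 2 * a - b)
      = N * (((b:ℚ) + 3) * (3 * (a:ℚ) + 2 * b + 3) * (3 * (a:ℚ) + (b:ℚ)))
        / (((((k:ℚ) + a + b + 2) + 1) * P) * Q * R) := by
    rw [f3, if_pos ⟨by linarith, by linarith, hp⟩]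
    have h1 : k + a + b + 1 + (k + a - 1) + (k - 2 * a - b) = 3 * k := by ring
    have h2 : k + a + b + 1 + 2 = k + a + b + 2 + 1 := by ring
    have h3 : k + a - 1 + 1 = k + a := by ring
    rw [h1, h2, h3, fact_succ_cast (k + a + b + 2) (by linarith)]
    rw [hN, hP, hQ, hR]
    push_cast
    ring
  have e2 : f3 (k + a + b) (k + a - 1) (k - 2 * a - b + 1)
      = N * (((b:ℚ) + 2) * (3 * (a:ℚ) + 2 * b + 1) * (3 * (a:ℚ) + (b:ℚ) - 1))
        / (P * Q * ((((k:ℚ) - 2 * a - b) + 1) * R)) := by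
    rw [f3, if_pos ⟨by linarith, by linarith, by linarith⟩]
    have h1 : k + a + b + (k + a - 1) + (k - 2 * a - b + 1) = 3 * k := by ring
    have h3 : k + a - 1 + 1 = k + a := by ring
    rw [h1, h3, fact_succ_cast (k - 2 * a - b) hp]
    rw [hN, hP, hQ, hR]
    push_cast
    ring
  have hL := key_poly (k:ℚ) (a:ℚ) (b:ℚ) hKQ haQ hbQ hpQ
  have part1 : (f3 (k + a + b) (k + a) (k - 2 * a - b) - f3 (k + a + b + 1) (k + a - 1) (k - 2 * a - b)) +
      (f3 (k + a + b) (k + a) (k - 2 * a - b) - f3 (k + a + b) (k + a - 1) (k - 2 * a - b + 1)) < 0 := by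
    rw [e0, e1, e2]
    apply main_ineq N P Q R ((k:ℚ) + a + 1) ((k:ℚ) + a + b + 2 + 1) ((k:ℚ) - 2 * a - b + 1)
      _ _ _ hNpos hPpos hQpos hRpos (by linarith) (by linarith) (by linarith)
    linarith [hL]
  refine ⟨part1, ?_⟩
  by_cases hcase : f3 (k + a + b) (k + a) (k - 2 * a - b) < f3 (k + a + b + 1) (k + a - 1) (k - 2 * a - b)
  · exact ⟨k + a + b + 1, k + a - 1, k - 2 * a - b, by linarith, by linarith, hp, by ring, hcase⟩
  · push_neg at hcase
    exact ⟨k + a + b, k + a - 1, k - 2 * a - b + 1, by linarith, by linarith, by linarith, by ring,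
      by linarith⟩
end

section
/- Let r₂ = (1/4)(-9 + √(49 + 24k)) for a positive integer k. Then r₂ is a nonnegative integer if and only if k = 5 + 13q + 6q² or k = 10 + 17q + 6q² for some integer q ≥ 0. -/
theorem stmt_15 (k : ℕ) (hk : 1 ≤ k) :
    (∃ m : ℕ, (-9 + Real.sqrt (49 + 24 * k)) / 4 = m) ↔
      ∃ q : ℕ, k = 5 + 13 * q + 6 * q ^ 2 ∨ k = 10 + 17 * q + 6 * q ^ 2 := by
  constructor
  · rintro ⟨m, hm⟩
    have hnn : (0:ℝ) ≤ 49 + 24 * k := by positivity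
    have hsqrt : Real.sqrt (49 + 24 * k) = 4 * m + 9 := by
      field_simp at hm; linarith
    have hsq : (49 + 24 * (k:ℝ)) = (4 * m + 9)^2 := by
      rw [← Real.sq_sqrt hnn, hsqrt]
    have hnat : 49 + 24 * k = (4 * m + 9)^2 := by exact_mod_cast hsq
    have hm3 : m % 3 = 0 ∨ m % 3 = 1 ∨ m % 3 = 2 := by omega
    set q := m / 3 with hqdef
    have hmq : m = 3 * q + m % 3 := by omega
    rcases hm3 with h0 | h1 | h2
    · exfalso
      have h' : 49 + 24 * k = 144 * q^2 + 216 * q + 81 := by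
        rw [hnat, hmq, h0]; ring
      set t := q ^ 2 with ht
      omega
    · refine ⟨q, Or.inl ?_⟩
      have h' : 49 + 24 * k = 144 * q^2 + 312 * q + 169 := by
        rw [hnat, hmq, h1]; ring
      set t := q ^ 2 with ht
      omega
    · refine ⟨q, Or.inr ?_⟩
      have h' : 49 + 24 * k = 144 * q^2 + 408 * q + 289 := by
        rw [hnat, hmq, h2]; ring
      set t := q ^ 2 with ht
      omega
  · rintro ⟨q, hq | hq⟩ <;> subst hq
    · refine ⟨3 * q + 1, ?_⟩
      have h : (49 + 24 * ((5 + 13 * q + 6 * q ^ 2 : ℕ) : ℝ)) = ((12 * q + 13 : ℝ))^2 := by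
        push_cast; ring
      rw [h, Real.sqrt_sq (by positivity)]
      push_cast; ring
    · refine ⟨3 * q + 2, ?_⟩
      have h : (49 + 24 * ((10 + 17 * q + 6 * q ^ 2 : ℕ) : ℝ)) = ((12 * q + 17 : ℝ))^2 := by
        push_cast; ring
      rw [h, Real.sqrt_sq (by positivity)]
      push_cast; ring
end

section
/- For every integer k ≥ 1, with r₁ = (1/4)(-10+√(60+24k)), r₃ = (1/4)(-8+√(40+24k)), r₀ = (1/2)(-3+√(3+3k+√(12+20k+9k²))), and r̂₀ = (1/2)(-3+√(6+3k+√(41+38k+9k²))), the chain of strict inequalities r₁ < r₃ < r₀ < r̂₀ < r₁ + 1 < r₃ + 1 holds. -/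
set_option maxHeartbeats 1000000 in
theorem stmt_17 (k : ℕ) (hk : 1 ≤ k)
    (r₁ r₃ r₀ r₀' : ℝ)
    (h₁ : r₁ = (-10 + Real.sqrt (60 + 24 * k)) / 4)
    (h₃ : r₃ = (-8 + Real.sqrt (40 + 24 * k)) / 4)
    (h₀ : r₀ = (-3 + Real.sqrt (3 + 3 * k + Real.sqrt (12 + 20 * k + 9 * (k : ℝ) ^ 2))) / 2)
    (h₀' : r₀' = (-3 + Real.sqrt (6 + 3 * k + Real.sqrt (41 + 38 * k + 9 * (k : ℝ) ^ 2))) / 2) :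
    r₁ < r₃ ∧ r₃ < r₀ ∧ r₀ < r₀' ∧ r₀' < r₁ + 1 ∧ r₁ + 1 < r₃ + 1 := by
  have hx0 : (1:ℝ) ≤ (k:ℝ) := by exact_mod_cast hk
  set x : ℝ := (k : ℝ) with hxdef
  have hx : (1:ℝ) ≤ x := hx0
  set sB := Real.sqrt (12 + 20 * x + 9 * x ^ 2) with hsBdef
  set sB' := Real.sqrt (41 + 38 * x + 9 * x ^ 2) with hsB'def
  set sA := Real.sqrt (3 + 3 * x + sB) with hsAdef
  set sA' := Real.sqrt (6 + 3 * x + sB') with hsA'def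
  set s1 := Real.sqrt (60 + 24 * x) with hs1def
  set s3 := Real.sqrt (40 + 24 * x) with hs3def
  have hsBnn : 0 ≤ sB := Real.sqrt_nonneg _
  have hsB'nn : 0 ≤ sB' := Real.sqrt_nonneg _
  have hsAnn : 0 ≤ sA := Real.sqrt_nonneg _
  have hsA'nn : 0 ≤ sA' := Real.sqrt_nonneg _
  -- s3 ≥ 8
  have hs3ge : (8:ℝ) ≤ s3 := by
    rw [hs3def, Real.le_sqrt (by norm_num) (by nlinarith)]
    nlinarith
  -- sB > 3x
  have hsBgt : 3 * x < sB := by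
    rw [hsBdef, Real.lt_sqrt (by nlinarith)]
    nlinarith
  -- sB > 3 (since sB² ≥ 41)
  have hsBgt3 : (3:ℝ) < sB := by
    rw [hsBdef, Real.lt_sqrt (by norm_num)]
    nlinarith
  -- sA > 3
  have hsAgt : (3:ℝ) < sA := by
    rw [hsAdef, Real.lt_sqrt (by norm_num)]
    nlinarith
  -- sB' < 9 + 3x
  have hsB'lt : sB' < 9 + 3 * x := by
    rw [hsB'def, Real.sqrt_lt' (by nlinarith)]
    nlinarith
  -- sA's bound: sA² = 3+3x+sB etc.
  have hsAsq : sA ^ 2 = 3 + 3 * x + sB := Real.sq_sqrt (by nlinarith)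
  have hsA'sq : sA' ^ 2 = 6 + 3 * x + sB' := Real.sq_sqrt (by nlinarith)
  have hs3sq : s3 ^ 2 = 40 + 24 * x := Real.sq_sqrt (by nlinarith)
  -- (1) s1 < 2 + s3
  have h1 : s1 < 2 + s3 := by
    rw [hs1def, Real.sqrt_lt' (by nlinarith)]
    nlinarith
  -- (2) s3 < 2 + 2 sA
  have h2 : s3 < 2 + 2 * sA := by
    rw [hs3def, Real.sqrt_lt' (by nlinarith)]
    nlinarith
  -- (3) sA < sA'
  have h3 : sA < sA' := by
    apply Real.sqrt_lt_sqrt (by nlinarith)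
    have : sB < sB' := Real.sqrt_lt_sqrt (by nlinarith) (by nlinarith)
    linarith
  -- (4) 2 sA' < s1
  have h4 : 2 * sA' < s1 := by
    rw [hs1def]
    apply Real.lt_sqrt_of_sq_lt
    nlinarith
  refine ⟨by rw [h₁, h₃]; linarith, by rw [h₃, h₀]; linarith,
    by rw [h₀, h₀']; linarith, by rw [h₀', h₁]; linarith, by rw [h₁, h₃]; linarith⟩
end
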